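/- Let U, X, Y₁, Y₂ be finite sets, P_{UX} a joint pmf on U × X, W₁ a channel assigning to each x ∈ X a pmf W₁(·|x) on Y₁, and W₂ a channel assigning to each y₁ ∈ Y₁ a pmf W₂(·|y₁) on Y₂ (so that U → X → Y₁ → Y₂ is a Markov chain). Define: I(X;Y₁) as the mutual information of the joint function (x,y₁) ↦ P_X(x)·W₁(y₁|x) where P_X(x) = ∑_u P_{UX}(u,x); I(U;Y₂) as the mutual information of the joint function (u,y₂) ↦ ∑_{x,y₁} P_{UX}(u,x)·W₁(y₁|x)·W₂(y₂|y₁); and the conditional mutual information I(X;Y₁|U) = ∑_{u,x,y₁} P_{UX}(u,x)·W₁(y₁|x)·(Real.log(W₁(y₁|x)) + Real.log(P_U(u)) − Real.log(∑_{x'} P_{UX}(u,x')·W₁(y₁|x'))), where P_U(u) = ∑_x P_{UX}(u,x). Then I(X;Y₁|U) + I(U;Y₂) ≤ I(X;Y₁). -/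

import Mathlib

open Real

/-- Mutual information of a joint function `P` on a product of finite alphabets. -/
noncomputable def mutualInfo {U Y : Type*} [Fintype U] [Fintype Y] (P : U → Y → ℝ) : ℝ :=
  ∑ u, ∑ y, P u y *
    (Real.log (P u y) - Real.log (∑ y', P u y') - Real.log (∑ u', P u' y))

private lemma logA (a b : ℝ) :
    a * b * (Real.log (a * b) - Real.log a) = a * b * Real.log b := by
  rcases eq_or_ne a 0 with h | h
  · simp [h]
  rcases eq_or_ne b 0 with h' | h'
  · simp [h']
  rw [Real.log_mul h h']; ring

private lemma rot3 {A B C : Type*} [Fintype A] [Fintype B] [Fintype C] (f : A → B → C → ℝ) :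
    ∑ a, ∑ b, ∑ c, f a b c = ∑ c, ∑ a, ∑ b, f a b c := by
  rw [show (∑ a, ∑ b, ∑ c, f a b c) = ∑ a, ∑ c, ∑ b, f a b c from
    Finset.sum_congr rfl fun a _ => Finset.sum_comm]
  exact Finset.sum_comm

private lemma chain {U X Y : Type*} [Fintype U] [Fintype X] [Fintype Y]
    (P : U → X → ℝ) (W : X → Y → ℝ) (hW1 : ∀ x, ∑ y, W x y = 1) :
    mutualInfo (fun x y => (∑ u, P u x) * W x y)
      = (∑ u, ∑ x, ∑ y, P u x * W x y *
          (Real.log (W x y) + Real.log (∑ x', P u x')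
            - Real.log (∑ x', P u x' * W x' y)))
        + mutualInfo (fun u y => ∑ x, P u x * W x y) := by
  have hPUrow : ∀ u : U, (∑ y', ∑ x, P u x * W x y') = ∑ x, P u x := by
    intro u; rw [Finset.sum_comm]
    exact Finset.sum_congr rfl fun x _ => by rw [← Finset.mul_sum, hW1, mul_one]
  have hT : ∀ y : Y, (∑ u', ∑ x, P u' x * W x y) = ∑ x', (∑ u', P u' x') * W x' y := by
    intro y; rw [Finset.sum_comm]
    exact Finset.sum_congr rfl fun x _ => by rw [Finset.sum_mul]
  have e_L : mutualInfo (fun x y => (∑ u, P u x) * W x y)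
      = ∑ u, ∑ x, ∑ y, P u x * W x y *
          (Real.log (W x y) - Real.log (∑ x', (∑ u', P u' x') * W x' y)) := by
    unfold mutualInfo
    rw [← rot3 (fun x y u => P u x * W x y *
      (Real.log (W x y) - Real.log (∑ x', (∑ u', P u' x') * W x' y)))]
    refine Finset.sum_congr rfl fun x _ => Finset.sum_congr rfl fun y _ => ?_
    rw [show (∑ y', (∑ u, P u x) * W x y') = ∑ u, P u x from by
      rw [← Finset.mul_sum, hW1, mul_one]]
    rw [← Finset.sum_mul, ← Finset.sum_mul]
    linear_combination logA (∑ u, P u x) (W x y)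
  have e_R : mutualInfo (fun u y => ∑ x, P u x * W x y)
      = ∑ u, ∑ x, ∑ y, P u x * W x y *
          (Real.log (∑ x', P u x' * W x' y) - Real.log (∑ x', P u x')
            - Real.log (∑ x', (∑ u', P u' x') * W x' y)) := by
    unfold mutualInfo
    refine Finset.sum_congr rfl fun u _ => ?_
    refine Eq.trans ?_ Finset.sum_comm
    refine Finset.sum_congr rfl fun y _ => ?_
    rw [hPUrow u, hT y, Finset.sum_mul]
  rw [e_L, e_R, ← Finset.sum_add_distrib]
  refine Finset.sum_congr rfl fun u _ => ?_
  rw [← Finset.sum_add_distrib]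
  refine Finset.sum_congr rfl fun x _ => ?_
  rw [← Finset.sum_add_distrib]
  refine Finset.sum_congr rfl fun y _ => ?_
  ring
private lemma keyIneq {r w t s t₂ : ℝ} (hr : 0 ≤ r) (hw : 0 ≤ w)
    (hrt : r ≤ t) (hs : r * w ≤ s) (hst : s ≤ t₂) :
    r * w - w * t * (s / t₂) ≤
      r * w * (Real.log r - Real.log t - Real.log s + Real.log t₂) := by
  rcases (mul_nonneg hr hw).eq_or_lt with h | h
  · have h0 : 0 ≤ s := h.le.trans hs
    have ht : 0 ≤ t := hr.trans hrt
    have ht2 : 0 ≤ t₂ := h0.trans hst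
    have : 0 ≤ w * t * (s / t₂) := by positivity
    rw [← h]
    linarith
  · have hr' : 0 < r := by
      rcases hr.lt_or_eq with h1 | h1
      · exact h1
      · exfalso; rw [← h1] at h; simp at h
    have hw' : 0 < w := by
      rcases hw.lt_or_eq with h1 | h1
      · exact h1
      · exfalso; rw [← h1] at h; simp at h
    have ht : 0 < t := hr'.trans_le hrt
    have hs' : 0 < s := h.trans_le hs
    have ht2 : 0 < t₂ := hs'.trans_le hst
    have hlog : Real.log (t * s / (r * t₂)) ≤ t * s / (r * t₂) - 1 :=
      Real.log_le_sub_one_of_pos (by positivity)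
    rw [Real.log_div (by positivity) (by positivity),
      Real.log_mul ht.ne' hs'.ne', Real.log_mul hr'.ne' ht2.ne'] at hlog
    have h2 := mul_le_mul_of_nonneg_left hlog h.le
    have expand : r * w * (t * s / (r * t₂)) = w * t * (s / t₂) := by
      field_simp
    nlinarith [h2]

private lemma dpi {U Y₁ Y₂ : Type*} [Fintype U] [Fintype Y₁] [Fintype Y₂]
    (R : U → Y₁ → ℝ) (hR : ∀ u y, 0 ≤ R u y)
    (W : Y₁ → Y₂ → ℝ) (hW0 : ∀ a b, 0 ≤ W a b) (hW1 : ∀ a, ∑ b, W a b = 1) :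
    mutualInfo (fun u y₂ => ∑ y₁, R u y₁ * W y₁ y₂) ≤ mutualInfo R := by
  have hS0 : ∀ u y₂, 0 ≤ ∑ y₁, R u y₁ * W y₁ y₂ := fun u y₂ =>
    Finset.sum_nonneg fun y₁ _ => mul_nonneg (hR u y₁) (hW0 y₁ y₂)
  have hSrow : ∀ u : U, (∑ y₂, ∑ y₁, R u y₁ * W y₁ y₂) = ∑ y₁, R u y₁ := by
    intro u; rw [Finset.sum_comm]
    exact Finset.sum_congr rfl fun y₁ _ => by rw [← Finset.mul_sum, hW1, mul_one]
  have hT2 : ∀ y₂ : Y₂, (∑ y₁, W y₁ y₂ * ∑ u', R u' y₁) = ∑ u', ∑ y₁, R u' y₁ * W y₁ y₂ := by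
    intro y₂
    rw [Finset.sum_comm]
    refine Finset.sum_congr rfl fun y₁ _ => ?_
    rw [Finset.mul_sum]
    exact Finset.sum_congr rfl fun u' _ => mul_comm _ _
  have hcancel : ∀ u y₂,
      ((∑ y₁, R u y₁ * W y₁ y₂) / (∑ u', ∑ y₁, R u' y₁ * W y₁ y₂))
        * (∑ u', ∑ y₁, R u' y₁ * W y₁ y₂) = ∑ y₁, R u y₁ * W y₁ y₂ := by
    intro u y₂
    rcases eq_or_ne (∑ u', ∑ y₁, R u' y₁ * W y₁ y₂) 0 with h | h
    · have hs0 : (∑ y₁, R u y₁ * W y₁ y₂) = 0 :=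
        le_antisymm (h ▸ Finset.single_le_sum (fun i _ => hS0 i y₂) (Finset.mem_univ u))
          (hS0 u y₂)
      simp [h, hs0]
    · rw [div_mul_cancel₀ _ h]
  unfold mutualInfo
  simp only [hSrow]
  refine Finset.sum_le_sum fun u _ => ?_
  have eL : (∑ y₂, (∑ y₁, R u y₁ * W y₁ y₂) *
        (Real.log (∑ y₁, R u y₁ * W y₁ y₂) - Real.log (∑ y₁, R u y₁)
          - Real.log (∑ u', ∑ y₁, R u' y₁ * W y₁ y₂)))
      = ∑ y₁, ∑ y₂, R u y₁ * W y₁ y₂ *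
        (Real.log (∑ y₁', R u y₁' * W y₁' y₂) - Real.log (∑ y₁, R u y₁)
          - Real.log (∑ u', ∑ y₁', R u' y₁' * W y₁' y₂)) := by
    refine Eq.trans ?_ Finset.sum_comm
    refine Finset.sum_congr rfl fun y₂ _ => ?_
    rw [Finset.sum_mul]
  have eR : (∑ y₁, R u y₁ *
        (Real.log (R u y₁) - Real.log (∑ y₁, R u y₁) - Real.log (∑ u', R u' y₁)))
      = ∑ y₁, ∑ y₂, R u y₁ * W y₁ y₂ *
        (Real.log (R u y₁) - Real.log (∑ y₁, R u y₁) - Real.log (∑ u', R u' y₁)) := by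
    refine Finset.sum_congr rfl fun y₁ _ => ?_
    rw [← Finset.sum_mul, ← Finset.mul_sum, hW1, mul_one]
  rw [eL, eR, ← sub_nonneg, ← Finset.sum_sub_distrib]
  have diff : ∀ y₁ : Y₁,
      ((∑ y₂, R u y₁ * W y₁ y₂ *
          (Real.log (R u y₁) - Real.log (∑ y₁, R u y₁) - Real.log (∑ u', R u' y₁)))
        - ∑ y₂, R u y₁ * W y₁ y₂ *
          (Real.log (∑ y₁', R u y₁' * W y₁' y₂) - Real.log (∑ y₁, R u y₁)
            - Real.log (∑ u', ∑ y₁', R u' y₁' * W y₁' y₂)))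
      = ∑ y₂, R u y₁ * W y₁ y₂ *
          (Real.log (R u y₁) - Real.log (∑ u', R u' y₁)
            - Real.log (∑ y₁', R u y₁' * W y₁' y₂)
            + Real.log (∑ u', ∑ y₁', R u' y₁' * W y₁' y₂)) := by
    intro y₁
    rw [← Finset.sum_sub_distrib]
    exact Finset.sum_congr rfl fun y₂ _ => by ring
  simp only [diff]
  have h1 : (∑ y₁, ∑ y₂, (R u y₁ * W y₁ y₂
        - W y₁ y₂ * (∑ u', R u' y₁) *
          ((∑ y₁', R u y₁' * W y₁' y₂) / (∑ u', ∑ y₁', R u' y₁' * W y₁' y₂))))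
      ≤ ∑ y₁, ∑ y₂, R u y₁ * W y₁ y₂ *
          (Real.log (R u y₁) - Real.log (∑ u', R u' y₁)
            - Real.log (∑ y₁', R u y₁' * W y₁' y₂)
            + Real.log (∑ u', ∑ y₁', R u' y₁' * W y₁' y₂)) := by
    refine Finset.sum_le_sum fun y₁ _ => Finset.sum_le_sum fun y₂ _ => ?_
    exact keyIneq (hR u y₁) (hW0 y₁ y₂)
      (Finset.single_le_sum (fun i _ => hR i y₁) (Finset.mem_univ u))
      (Finset.single_le_sum (fun i _ => mul_nonneg (hR u i) (hW0 i y₂)) (Finset.mem_univ y₁))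
      (Finset.single_le_sum (fun i _ => hS0 i y₂) (Finset.mem_univ u))
  have h2 : (∑ y₁, ∑ y₂, (R u y₁ * W y₁ y₂
        - W y₁ y₂ * (∑ u', R u' y₁) *
          ((∑ y₁', R u y₁' * W y₁' y₂) / (∑ u', ∑ y₁', R u' y₁' * W y₁' y₂))))
      = 0 := by
    simp only [Finset.sum_sub_distrib]
    have hA : (∑ y₁, ∑ y₂, R u y₁ * W y₁ y₂) = ∑ y₁, R u y₁ :=
      Finset.sum_congr rfl fun y₁ _ => by rw [← Finset.mul_sum, hW1, mul_one]
    have hB : (∑ y₁, ∑ y₂, W y₁ y₂ * (∑ u', R u' y₁) *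
          ((∑ y₁', R u y₁' * W y₁' y₂) / (∑ u', ∑ y₁', R u' y₁' * W y₁' y₂)))
        = ∑ y₁, R u y₁ := by
      rw [Finset.sum_comm]
      have : ∀ y₂ : Y₂, (∑ y₁, W y₁ y₂ * (∑ u', R u' y₁) *
            ((∑ y₁', R u y₁' * W y₁' y₂) / (∑ u', ∑ y₁', R u' y₁' * W y₁' y₂)))
          = ∑ y₁, R u y₁ * W y₁ y₂ := by
        intro y₂
        rw [← Finset.sum_mul, hT2 y₂, mul_comm, hcancel u y₂]
      simp only [this]
      exact hSrow u
    rw [hA, hB, sub_self]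
  linarith
theorem stmt_11 {U X Y₁ Y₂ : Type*} [Fintype U] [Fintype X] [Fintype Y₁] [Fintype Y₂]
    (P : U → X → ℝ) (hP0 : ∀ u x, 0 ≤ P u x) (hP1 : ∑ u, ∑ x, P u x = 1)
    (W₁ : X → Y₁ → ℝ) (hW₁0 : ∀ x y₁, 0 ≤ W₁ x y₁) (hW₁1 : ∀ x, ∑ y₁, W₁ x y₁ = 1)
    (W₂ : Y₁ → Y₂ → ℝ) (hW₂0 : ∀ y₁ y₂, 0 ≤ W₂ y₁ y₂) (hW₂1 : ∀ y₁, ∑ y₂, W₂ y₁ y₂ = 1) :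
    (∑ u, ∑ x, ∑ y₁, P u x * W₁ x y₁ *
        (Real.log (W₁ x y₁) + Real.log (∑ x', P u x')
          - Real.log (∑ x', P u x' * W₁ x' y₁)))
      + mutualInfo (fun (u : U) (y₂ : Y₂) => ∑ x, ∑ y₁, P u x * W₁ x y₁ * W₂ y₁ y₂)
      ≤ mutualInfo (fun (x : X) (y₁ : Y₁) => (∑ u, P u x) * W₁ x y₁) := by
  have hRfun : (fun (u : U) (y₂ : Y₂) => ∑ x, ∑ y₁, P u x * W₁ x y₁ * W₂ y₁ y₂)
      = fun u y₂ => ∑ y₁, (∑ x, P u x * W₁ x y₁) * W₂ y₁ y₂ := by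
    funext u y₂
    rw [Finset.sum_comm]
    exact Finset.sum_congr rfl fun y₁ _ => by rw [Finset.sum_mul]
  rw [hRfun, chain P W₁ hW₁1]
  exact add_le_add_right
    (dpi (fun u y₁ => ∑ x, P u x * W₁ x y₁)
      (fun u y₁ => Finset.sum_nonneg fun x _ => mul_nonneg (hP0 u x) (hW₁0 x y₁))
      W₂ hW₂0 hW₂1) _
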